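/- The set of weakly compact matrices on I × J is a closed linear subspace of ℓ^∞(I × J). -/

import Mathlib

open scoped ENNReal
open NormedSpace Set Metric Pointwise


/-- The `i`-th row of an element of `ℓ^∞(I × J)`, as an element of `ℓ^∞(J)`. -/
noncomputable def matrixRow {I J : Type*} (F : lp (fun _ : I × J => ℂ) ∞) (i : I) :
    lp (fun _ : J => ℂ) ∞ :=
  ⟨fun j => F (i, j), by
    show Memℓp (fun j => F (i, j)) ∞
    have h := lp.memℓp F
    rw [memℓp_infty_iff] at h ⊢
    exact h.mono (by rintro x ⟨j, rfl⟩; exact ⟨(i, j), rfl⟩)⟩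

/-- An element of `ℓ^∞(I × J)` is a *weakly compact matrix* if its set of rows
is relatively weakly compact in `ℓ^∞(J)`. -/
def WeaklyCompactMatrix {I J : Type*} (F : lp (fun _ : I × J => ℂ) ∞) : Prop :=
  IsCompact (closure (toWeakSpace ℂ (lp (fun _ : J => ℂ) ∞) '' Set.range (matrixRow F)))

noncomputable section

namespace WCMaux

variable (E : Type*) [NormedAddCommGroup E] [NormedSpace ℂ E]

def iota : E → WeakDual ℂ (StrongDual ℂ E) := fun x => inclusionInDoubleDual ℂ E x

def iw : WeakSpace ℂ E → WeakDual ℂ (StrongDual ℂ E) :=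
  fun x => iota E ((toWeakSpace ℂ E).symm x)

lemma isInducing_iw : Topology.IsInducing (iw E) := by
  constructor
  show TopologicalSpace.induced (fun (x : WeakSpace ℂ E) y => (topDualPairing ℂ E).flip x y)
      Pi.topologicalSpace = _
  show _ = TopologicalSpace.induced (iw E)
      (TopologicalSpace.induced (fun (φ : WeakDual ℂ (StrongDual ℂ E)) f =>
        topDualPairing ℂ (StrongDual ℂ E) φ f) Pi.topologicalSpace)
  rw [induced_compose]
  rfl

variable {E}

lemma iw_image_toWeakSpace_image (A : Set E) :
    iw E '' (toWeakSpace ℂ E '' A) = iota E '' A := by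
  rw [Set.image_image]
  apply Set.image_congr
  intro x _
  simp [iw]

lemma range_iw : Set.range (iw E) = Set.range (iota E) := by
  ext φ
  constructor
  · rintro ⟨x, rfl⟩; exact ⟨_, rfl⟩
  · rintro ⟨x, rfl⟩; exact ⟨toWeakSpace ℂ E x, by simp [iw]⟩

lemma iota_add (x y : E) : iota E (x + y) = iota E x + iota E y := by
  simp [iota, map_add]; rfl

lemma iota_smul (c : ℂ) (x : E) : iota E (c • x) = c • iota E x := by
  simp [iota, map_smul]; rfl

lemma norm_toNormedDual_iota (x : E) :
    ‖WeakDual.toStrongDual (iota E x)‖ = ‖x‖ :=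
  (inclusionInDoubleDualLi ℂ (E := E)).norm_map x

/-- closed balls in the weak-star bidual -/
def bidualBall (r : ℝ) : Set (WeakDual ℂ (StrongDual ℂ E)) :=
  WeakDual.toStrongDual ⁻¹' closedBall (0 : StrongDual ℂ (StrongDual ℂ E)) r

lemma isCompact_bidualBall (r : ℝ) : IsCompact (bidualBall (E := E) r) :=
  WeakDual.isCompact_closedBall (𝕜 := ℂ) (E := StrongDual ℂ E) 0 r

lemma mem_bidualBall_iff (r : ℝ) (φ : WeakDual ℂ (StrongDual ℂ E)) :
    φ ∈ bidualBall (E := E) r ↔ ‖WeakDual.toStrongDual φ‖ ≤ r := by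
  simp [bidualBall, mem_closedBall, dist_zero_right]
  exact iff_of_eq (congrArg (· ≤ r) (dist_zero_right (WeakDual.toStrongDual φ)))

lemma iota_mem_bidualBall {x : E} {r : ℝ} (h : ‖x‖ ≤ r) :
    iota E x ∈ bidualBall (E := E) r := by
  rw [mem_bidualBall_iff, norm_toNormedDual_iota]; exact h


lemma compact_closure_iff (A : Set E) (C : ℝ) (hb : ∀ x ∈ A, ‖x‖ ≤ C) :
    IsCompact (closure (toWeakSpace ℂ E '' A)) ↔
      closure (iota E '' A) ⊆ Set.range (iota E) := by
  constructor
  · intro h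
    have h2 : IsCompact (iw E '' closure (toWeakSpace ℂ E '' A)) :=
      h.image (isInducing_iw E).continuous
    have h4 : iota E '' A ⊆ iw E '' closure (toWeakSpace ℂ E '' A) := by
      rw [← iw_image_toWeakSpace_image]
      exact Set.image_mono subset_closure
    refine (closure_minimal h4 h2.isClosed).trans ?_
    rw [← range_iw]
    rintro x ⟨y, _, rfl⟩; exact ⟨y, rfl⟩
  · intro h
    have hball : closure (iota E '' A) ⊆ bidualBall (E := E) C := by
      apply closure_minimal _ (isCompact_bidualBall (E := E) C).isClosed
      rintro _ ⟨x, hx, rfl⟩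
      exact iota_mem_bidualBall (hb x hx)
    have hK : IsCompact (closure (iota E '' A)) :=
      (isCompact_bidualBall (E := E) C).of_isClosed_subset isClosed_closure hball
    rw [(isInducing_iw E).closure_eq_preimage_closure_image,
      iw_image_toWeakSpace_image, (isInducing_iw E).isCompact_iff]
    have himg : iw E '' (iw E ⁻¹' closure (iota E '' A)) = closure (iota E '' A) := by
      apply Set.image_preimage_eq_of_subset
      rw [range_iw]; exact h
    rw [himg]; exact hK

lemma mem_range_iota_of_approx [CompleteSpace E] (x : WeakDual ℂ (StrongDual ℂ E))
    (h : ∀ ε : ℝ, 0 < ε → ∃ y z : WeakDual ℂ (StrongDual ℂ E),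
      y ∈ Set.range (iota E) ∧ ‖WeakDual.toStrongDual z‖ ≤ ε ∧ x = y + z) :
    x ∈ Set.range (iota E) := by
  have hcl : IsClosed (Set.range
      ((inclusionInDoubleDualLi ℂ (E := E)) : E → StrongDual ℂ (StrongDual ℂ E))) := by
    have h0 : Isometry ((inclusionInDoubleDualLi ℂ (E := E)) : E → StrongDual ℂ (StrongDual ℂ E)) :=
      (inclusionInDoubleDualLi ℂ (E := E)).isometry
    exact h0.isClosedEmbedding.isClosed_range
  have hrange : ∀ y : WeakDual ℂ (StrongDual ℂ E), y ∈ Set.range (iota E) ↔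
      WeakDual.toStrongDual y ∈ Set.range
        ((inclusionInDoubleDualLi ℂ (E := E)) : E → StrongDual ℂ (StrongDual ℂ E)) := by
    intro y; constructor
    · rintro ⟨w, rfl⟩; exact ⟨w, rfl⟩
    · rintro ⟨w, hw⟩
      refine ⟨w, WeakDual.toStrongDual.injective ?_⟩
      rw [← hw]; rfl
  rw [hrange, ← hcl.closure_eq]
  refine (Metric.mem_closure_iff (α := StrongDual ℂ (StrongDual ℂ E))).mpr ?_
  intro ε hε
  obtain ⟨y, z, hy, hz, rfl⟩ := h (ε / 2) (by positivity)
  refine ⟨WeakDual.toStrongDual y, (hrange y).1 hy, ?_⟩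
  refine (dist_eq_norm (WeakDual.toStrongDual (y + z)) (WeakDual.toStrongDual y)).trans_lt ?_
  have h5 : WeakDual.toStrongDual (y + z) - WeakDual.toStrongDual y
      = WeakDual.toStrongDual z := by
    rw [map_add]; abel
  rw [h5]
  linarith

end WCMaux

section lpPart

variable {I J : Type*}

lemma matrixRow_apply (F : lp (fun _ : I × J => ℂ) ∞) (i : I) (j : J) :
    matrixRow F i j = F (i, j) := rfl

lemma matrixRow_add (F G : lp (fun _ : I × J => ℂ) ∞) (i : I) :
    matrixRow (F + G) i = matrixRow F i + matrixRow G i := by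
  apply lp.ext
  funext j
  simp only [lp.coeFn_add, Pi.add_apply, matrixRow_apply]

lemma matrixRow_sub (F G : lp (fun _ : I × J => ℂ) ∞) (i : I) :
    matrixRow (F - G) i = matrixRow F i - matrixRow G i := by
  apply lp.ext
  funext j
  simp only [lp.coeFn_sub, Pi.sub_apply, matrixRow_apply]

lemma matrixRow_smul (c : ℂ) (F : lp (fun _ : I × J => ℂ) ∞) (i : I) :
    matrixRow (c • F) i = c • matrixRow F i := by
  apply lp.ext
  funext j
  simp only [lp.coeFn_smul, Pi.smul_apply, matrixRow_apply]

lemma matrixRow_zero (i : I) :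
    matrixRow (0 : lp (fun _ : I × J => ℂ) ∞) i = 0 := by
  apply lp.ext
  funext j
  simp only [lp.coeFn_zero, Pi.zero_apply, matrixRow_apply]

lemma norm_matrixRow_le (F : lp (fun _ : I × J => ℂ) ∞) (i : I) :
    ‖matrixRow F i‖ ≤ ‖F‖ :=
  lp.norm_le_of_forall_le (norm_nonneg F) fun j =>
    lp.norm_apply_le_norm ENNReal.top_ne_zero F (i, j)

lemma wcm_iff (F : lp (fun _ : I × J => ℂ) ∞) :
    WeaklyCompactMatrix F ↔
      closure (WCMaux.iota (lp (fun _ : J => ℂ) ∞) '' Set.range (matrixRow F))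
        ⊆ Set.range (WCMaux.iota (lp (fun _ : J => ℂ) ∞)) := by
  refine (WCMaux.compact_closure_iff _ ‖F‖ ?_)
  rintro _ ⟨i, rfl⟩
  exact norm_matrixRow_le F i

lemma isCompact_closure_iota_rows (F : lp (fun _ : I × J => ℂ) ∞) :
    IsCompact (closure (WCMaux.iota (lp (fun _ : J => ℂ) ∞) '' Set.range (matrixRow F))) := by
  apply (WCMaux.isCompact_bidualBall (E := lp (fun _ : J => ℂ) ∞) ‖F‖).of_isClosed_subset
    isClosed_closure
  apply closure_minimal _ (WCMaux.isCompact_bidualBall _).isClosed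
  rintro _ ⟨_, ⟨i, rfl⟩, rfl⟩
  exact WCMaux.iota_mem_bidualBall (norm_matrixRow_le F i)

end lpPart

set_option maxHeartbeats 1000000 in
/-- the set of weakly compact matrices on `I × J` is a closed
linear subspace of `ℓ^∞(I × J)`. -/
theorem weaklyCompactMatrix_closed_subspace (I J : Type*) :
    ∃ p : Submodule ℂ (lp (fun _ : I × J => ℂ) ∞),
      (p : Set (lp (fun _ : I × J => ℂ) ∞)) = {F | WeaklyCompactMatrix F} ∧
      IsClosed (p : Set (lp (fun _ : I × J => ℂ) ∞)) := by
  refine ⟨{ carrier := {F | WeaklyCompactMatrix F},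
            zero_mem' := ?zero, add_mem' := ?add, smul_mem' := ?smul }, rfl, ?closed⟩
  case zero =>
    show WeaklyCompactMatrix (0 : lp (fun _ : I × J => ℂ) ∞)
    rw [wcm_iff]
    have h1 : WCMaux.iota (lp (fun _ : J => ℂ) ∞) ''
        Set.range (matrixRow (0 : lp (fun _ : I × J => ℂ) ∞))
        ⊆ {WCMaux.iota (lp (fun _ : J => ℂ) ∞) 0} := by
      rintro _ ⟨_, ⟨i, rfl⟩, rfl⟩
      rw [Set.mem_singleton_iff, matrixRow_zero]
    refine (closure_minimal h1 isClosed_singleton).trans ?_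
    rw [Set.singleton_subset_iff]
    exact Set.mem_range_self 0
  case add =>
    intro F G hF hG
    replace hF : WeaklyCompactMatrix F := hF
    replace hG : WeaklyCompactMatrix G := hG
    show WeaklyCompactMatrix (F + G)
    rw [wcm_iff] at hF hG ⊢
    let K₁ := closure (WCMaux.iota (lp (fun _ : J => ℂ) ∞) '' Set.range (matrixRow F))
    let K₂ := closure (WCMaux.iota (lp (fun _ : J => ℂ) ∞) '' Set.range (matrixRow G))
    have hsub : WCMaux.iota (lp (fun _ : J => ℂ) ∞) '' Set.range (matrixRow (F + G))
        ⊆ K₁ + K₂ := by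
      rintro _ ⟨_, ⟨i, rfl⟩, rfl⟩
      rw [matrixRow_add, WCMaux.iota_add]
      exact Set.add_mem_add
        (subset_closure (Set.mem_image_of_mem _ (Set.mem_range_self i)))
        (subset_closure (Set.mem_image_of_mem _ (Set.mem_range_self i)))
    have hcomp : IsCompact (K₁ + K₂) :=
      (isCompact_closure_iota_rows F).add (isCompact_closure_iota_rows G)
    refine (closure_minimal hsub hcomp.isClosed).trans ?_
    rintro a ha
    obtain ⟨y, hy, z, hz, rfl⟩ := Set.mem_add.mp ha
    obtain ⟨u, rfl⟩ := hF hy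
    obtain ⟨v, rfl⟩ := hG hz
    exact ⟨u + v, WCMaux.iota_add u v⟩
  case smul =>
    intro c F hF
    replace hF : WeaklyCompactMatrix F := hF
    show WeaklyCompactMatrix (c • F)
    rw [wcm_iff] at hF ⊢
    let K := closure (WCMaux.iota (lp (fun _ : J => ℂ) ∞) '' Set.range (matrixRow F))
    have hsub : WCMaux.iota (lp (fun _ : J => ℂ) ∞) '' Set.range (matrixRow (c • F))
        ⊆ c • K := by
      rintro _ ⟨_, ⟨i, rfl⟩, rfl⟩
      rw [matrixRow_smul, WCMaux.iota_smul]
      exact Set.smul_mem_smul_set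
        (subset_closure (Set.mem_image_of_mem _ (Set.mem_range_self i)))
    have hcomp : IsCompact (c • K) := (isCompact_closure_iota_rows F).smul c
    refine (closure_minimal hsub hcomp.isClosed).trans ?_
    rintro a ha
    obtain ⟨y, hy, rfl⟩ := ha
    obtain ⟨u, rfl⟩ := hF hy
    exact ⟨c • u, WCMaux.iota_smul c u⟩
  case closed =>
    apply isClosed_of_closure_subset
    intro F hF
    show WeaklyCompactMatrix F
    rw [wcm_iff]
    intro x hx
    apply WCMaux.mem_range_iota_of_approx
    intro ε hε
    obtain ⟨G, hG, hdist⟩ := Metric.mem_closure_iff.mp hF ε hε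
    replace hG : WeaklyCompactMatrix G := hG
    have hGr := (wcm_iff G).mp hG
    let K := closure (WCMaux.iota (lp (fun _ : J => ℂ) ∞) '' Set.range (matrixRow G))
    have hsum : IsCompact (K + WCMaux.bidualBall (E := lp (fun _ : J => ℂ) ∞) ε) :=
      (isCompact_closure_iota_rows G).add (WCMaux.isCompact_bidualBall ε)
    have hsub : WCMaux.iota (lp (fun _ : J => ℂ) ∞) '' Set.range (matrixRow F)
        ⊆ K + WCMaux.bidualBall (E := lp (fun _ : J => ℂ) ∞) ε := by
      rintro _ ⟨_, ⟨i, rfl⟩, rfl⟩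
      have hdecomp : matrixRow F i = matrixRow G i + (matrixRow F i - matrixRow G i) := by
        abel
      rw [hdecomp, WCMaux.iota_add]
      refine Set.add_mem_add
        (subset_closure (Set.mem_image_of_mem _ (Set.mem_range_self i))) ?_
      apply WCMaux.iota_mem_bidualBall
      rw [← matrixRow_sub]
      calc ‖matrixRow (F - G) i‖ ≤ ‖F - G‖ := norm_matrixRow_le _ i
        _ ≤ ε := by rw [← dist_eq_norm]; exact hdist.le
    have hx' : x ∈ K + WCMaux.bidualBall (E := lp (fun _ : J => ℂ) ∞) ε :=
      closure_minimal hsub hsum.isClosed hx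
    obtain ⟨y, hy, z, hz, rfl⟩ := Set.mem_add.mp hx'
    exact ⟨y, z, hGr hy, (WCMaux.mem_bidualBall_iff ε z).mp hz, rfl⟩
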